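/- Let τ(n) be the coefficients of q·∏_{m≥1}(1-q^m)^{24} = Σ_{n≥1} τ(n) q^n. Then τ(n) ≡ 0 (mod 3) whenever n ≢ 1 (mod 3). -/
import Mathlib


open Finset Polynomial

/-- Ramanujan's tau function: the coefficient of `q^n` in
`q * ∏_{m ≥ 1} (1 - q^m)^24`.  Since the factors with `m > n` do not affect
the coefficient of `q^{n-1}`, the product may be truncated at `m = n`. -/
noncomputable def ramanujanTau (n : ℕ) : ℤ :=
  (∏ m ∈ Finset.Icc 1 n, ((1 : Polynomial ℤ) - Polynomial.X ^ m) ^ 24).coeff (n - 1)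

theorem tau_mod_three (n : ℕ) (hn : 1 ≤ n) (h : n % 3 ≠ 1) :
    (3 : ℤ) ∣ ramanujanTau n := by
  have hiff := ZMod.intCast_zmod_eq_zero_iff_dvd (ramanujanTau n) 3
  rw [show ((3:ℕ):ℤ) = 3 from rfl] at hiff
  rw [← hiff]
  have key : ((ramanujanTau n : ℤ) : ZMod 3)
      = ((∏ m ∈ Finset.Icc 1 n, ((1 : Polynomial (ZMod 3)) - X ^ m) ^ 24).coeff (n - 1)) := by
    unfold ramanujanTau
    have e : ((((∏ m ∈ Finset.Icc 1 n, ((1 : Polynomial ℤ) - X ^ m) ^ 24).coeff (n - 1) : ℤ)) : ZMod 3)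
        = (Int.castRingHom (ZMod 3))
            ((∏ m ∈ Finset.Icc 1 n, ((1 : Polynomial ℤ) - X ^ m) ^ 24).coeff (n - 1)) := rfl
    rw [e, ← Polynomial.coeff_map]
    congr 1
    rw [Polynomial.map_prod]
    refine Finset.prod_congr rfl fun m _ => ?_
    simp
  rw [key]
  have hfrob : ∀ m : ℕ, ((1 : Polynomial (ZMod 3)) - X ^ m) ^ 24
      = Polynomial.expand (ZMod 3) 3 (((1 : Polynomial (ZMod 3)) - X ^ m) ^ 8) := by
    intro m
    rw [map_pow, map_sub, map_one, map_pow, Polynomial.expand_X]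
    rw [show (24:ℕ) = 3*8 by norm_num, pow_mul]
    rw [sub_pow_char, one_pow]
    simp only [← pow_mul]
    rw [mul_comm m 3]
  rw [Finset.prod_congr rfl fun m _ => hfrob m, ← map_prod]
  rw [Polynomial.coeff_expand (by norm_num : 0 < 3)]
  rw [if_neg]
  omega
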